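/- Assume |g_t| ≤ G almost surely for all t, for a constant G > 0, and let σ_t² := E[(g_t − μ_y)² | F_{t−1}]. Then for every t, Σ_{s=1}^t σ_s² ≤ 2t(G² + μ_y²) almost surely; consequently, for T ≥ 4 and any δ ∈ (0, 1/e), with probability at least 1 − δ, simultaneously for all t ∈ [T]: |w_{t+1} − μ_y| ≤ (2 max{ 2√(2t(G² + μ_y²)), (G + |μ_y|) √(log(log(T)/δ)) } · √(log(log(T)/δ)))/T + (1 − t/T)|μ_y|, a bound of order √t/T = O(1/√t) for t of order T. -/

import Mathlib

/-
STATEMENT 4: Assume |g_t| ≤ G almost surely for all t, for a constant G > 0, and let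
σ_t² := E[(g_t − μ_y)² | F_{t−1}]. Then for every t, Σ_{s=1}^t σ_s² ≤ 2t(G² + μ_y²) almost
surely; consequently, for T ≥ 4 and any δ ∈ (0, 1/e), with probability at least 1 − δ,
simultaneously for all t ∈ [T]:
|w_{t+1} − μ_y| ≤ (2 max{ 2√(2t(G² + μ_y²)), (G + |μ_y|) √(log(log(T)/δ)) } · √(log(log(T)/δ)))/T
                  + (1 − t/T)|μ_y|.
-/

open MeasureTheory ProbabilityTheory

section AzumaAux
open MeasureTheory ProbabilityTheory Finset
open scoped ENNReal
set_option linter.unusedSectionVars false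
set_option linter.unusedVariables false
set_option maxHeartbeats 1000000

variable {Ω : Type*} {m0 : MeasurableSpace Ω} {μ : Measure Ω} [IsProbabilityMeasure μ]
  {ℱ : Filtration ℕ m0}

section Azuma
variable (μ) (ℱ) (d : ℕ → Ω → ℝ) (c : ℝ)

/-- partial sums -/
noncomputable def psum (k : ℕ) (ω : Ω) : ℝ := ∑ s ∈ Finset.Icc 1 k, d s ω

variable {μ ℱ d c}

lemma psum_meas (hmeas : ∀ s, Measurable[ℱ s] (d s)) (k : ℕ) :
    Measurable[ℱ k] (psum d k) := by
  apply Finset.measurable_sum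
  intro s hs
  exact (hmeas s).mono (ℱ.mono (Finset.mem_Icc.mp hs).2) le_rfl

lemma psum_abs_le (hc : 0 < c) (hbdd : ∀ s, 1 ≤ s → ∀ᵐ ω ∂μ, |d s ω| ≤ c) (k : ℕ) :
    ∀ᵐ ω ∂μ, |psum d k ω| ≤ k * c := by
  have h : ∀ᵐ ω ∂μ, ∀ s : ℕ, s ∈ Finset.Icc 1 k → |d s ω| ≤ c := by
    rw [MeasureTheory.ae_all_iff]
    intro s
    by_cases hs : s ∈ Finset.Icc 1 k
    · filter_upwards [hbdd s (Finset.mem_Icc.mp hs).1] with ω hω _ using hω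
    · filter_upwards with ω hs' using absurd hs' hs
  filter_upwards [h] with ω hω
  calc |psum d k ω| ≤ ∑ s ∈ Finset.Icc 1 k, |d s ω| := Finset.abs_sum_le_sum_abs _ _
    _ ≤ ∑ s ∈ Finset.Icc 1 k, c := Finset.sum_le_sum hω
    _ = k * c := by rw [Finset.sum_const, Nat.card_Icc]; simp [nsmul_eq_mul]

lemma integrable_of_bdd {f : Ω → ℝ} {C : ℝ} (hm : AEStronglyMeasurable f μ)
    (h : ∀ᵐ ω ∂μ, |f ω| ≤ C) : Integrable f μ :=
  (integrable_const C).mono' hm (by simpa [Real.norm_eq_abs] using h)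

section condmgf
variable (hc : 0 < c) (hmeas : ∀ s, Measurable[ℱ s] (d s))
  (hbdd : ∀ s, 1 ≤ s → ∀ᵐ ω ∂μ, |d s ω| ≤ c)
  (hcond : ∀ s, 1 ≤ s → μ[d s | ℱ (s - 1)] =ᵐ[μ] 0) (lam : ℝ)

include hc hmeas hbdd in
lemma d_integrable (j : ℕ) : Integrable (d (j + 1)) μ :=
  integrable_of_bdd (((hmeas (j+1)).mono (ℱ.le _) le_rfl).aestronglyMeasurable) (hbdd (j+1) j.succ_pos)

include hc hmeas hbdd in
lemma exp_d_integrable (j : ℕ) :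
    Integrable (fun ω => Real.exp (lam * d (j + 1) ω)) μ := by
  refine integrable_of_bdd (C := Real.exp (|lam| * c)) (Measurable.aestronglyMeasurable ?_) ?_
  · exact Real.measurable_exp.comp (((hmeas (j+1)).mono (ℱ.le _) le_rfl).const_mul lam)
  · filter_upwards [hbdd (j+1) j.succ_pos] with ω hω
    rw [abs_of_pos (Real.exp_pos _)]
    refine Real.exp_le_exp.mpr ?_
    calc lam * d (j+1) ω ≤ |lam * d (j+1) ω| := le_abs_self _
      _ = |lam| * |d (j+1) ω| := abs_mul _ _
      _ ≤ |lam| * c := mul_le_mul_of_nonneg_left hω (abs_nonneg lam)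

include hc hmeas hbdd hcond in
lemma cond_mgf_lower (j : ℕ) :
    (fun _ => (1:ℝ)) ≤ᵐ[μ] μ[fun ω => Real.exp (lam * d (j + 1) ω) | ℱ j] := by
  have hdint := d_integrable hc hmeas hbdd j
  have hz : μ[d (j+1) | ℱ j] =ᵐ[μ] 0 := by simpa using hcond (j+1) j.succ_pos
  have h1 : Integrable ((fun _ => (1:ℝ)) + lam • d (j + 1)) μ :=
    (integrable_const 1).add (hdint.smul lam)
  have hlin : μ[(fun _ => (1:ℝ)) + lam • d (j+1) | ℱ j] =ᵐ[μ] fun _ => (1:ℝ) := by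
    refine (condExp_add (integrable_const 1) (hdint.smul lam) _).trans ?_
    rw [condExp_const (ℱ.le j) (1:ℝ)]
    filter_upwards [condExp_smul (m := ℱ j) (μ := μ) lam (d (j+1)), hz] with ω h2 h3
    simp only [Pi.add_apply, h2, Pi.smul_apply, h3, Pi.zero_apply, smul_eq_mul, mul_zero, add_zero]
  have hmono := condExp_mono (m := ℱ j) (μ := μ) h1 (exp_d_integrable hc hmeas hbdd lam j)
    (Filter.Eventually.of_forall fun ω => by
      show 1 + lam * d (j+1) ω ≤ Real.exp (lam * d (j+1) ω)
      linarith [Real.add_one_le_exp (lam * d (j+1) ω)])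
  exact hlin.symm.le.trans hmono

include hc hmeas hbdd hcond in
lemma cond_mgf_upper (j : ℕ) :
    μ[fun ω => Real.exp (lam * d (j + 1) ω) | ℱ j] ≤ᵐ[μ]
      fun _ => Real.exp (lam ^ 2 * c ^ 2 / 2) := by
  have hdint := d_integrable hc hmeas hbdd j
  have hz : μ[d (j+1) | ℱ j] =ᵐ[μ] 0 := by simpa using hcond (j+1) j.succ_pos
  set A := Real.cosh (lam * c) with hA
  set B := Real.sinh (lam * c) / c with hB
  have hchordint : Integrable ((fun _ => A) + B • d (j + 1)) μ :=
    (integrable_const A).add (hdint.smul B)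
  have hchord : (fun ω => Real.exp (lam * d (j + 1) ω)) ≤ᵐ[μ]
      (fun _ => A) + B • d (j + 1) := by
    filter_upwards [hbdd (j+1) j.succ_pos] with ω hω
    have ht : |d (j+1) ω / c| ≤ 1 := by
      rw [abs_div, abs_of_pos hc, div_le_one hc]; exact hω
    have h := Real.exp_mul_le_cosh_add_mul_sinh ht (lam * c)
    have he : d (j+1) ω / c * (lam * c) = lam * d (j+1) ω := by field_simp
    rw [he] at h
    show Real.exp (lam * d (j+1) ω) ≤ A + B * d (j+1) ω
    rw [hA, hB]
    calc Real.exp (lam * d (j+1) ω)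
        ≤ Real.cosh (lam*c) + d (j+1) ω / c * Real.sinh (lam*c) := h
      _ = Real.cosh (lam*c) + Real.sinh (lam*c) / c * d (j+1) ω := by ring
  have hmono := condExp_mono (m := ℱ j) (μ := μ)
    (exp_d_integrable hc hmeas hbdd lam j) hchordint hchord
  refine hmono.trans ?_
  have hadd := (condExp_add (m := ℱ j) (μ := μ) (integrable_const A) (hdint.smul B))
  refine hadd.le.trans ?_
  have hfin : A ≤ Real.exp (lam ^ 2 * c ^ 2 / 2) := by
    rw [hA]
    calc Real.cosh (lam*c) ≤ Real.exp ((lam*c)^2/2) := Real.cosh_le_exp_half_sq _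
      _ = Real.exp (lam^2*c^2/2) := by rw [mul_pow]
  rw [condExp_const (ℱ.le j) A]
  filter_upwards [condExp_smul (m := ℱ j) (μ := μ) B (d (j+1)), hz] with ω h2 h3
  simp only [Pi.add_apply, h2, Pi.smul_apply, h3, Pi.zero_apply, smul_eq_mul, mul_zero, add_zero]
  exact hfin

end condmgf

section azuma
variable (hc : 0 < c) (hmeas : ∀ s, Measurable[ℱ s] (d s))
  (hbdd : ∀ s, 1 ≤ s → ∀ᵐ ω ∂μ, |d s ω| ≤ c)
  (hcond : ∀ s, 1 ≤ s → μ[d s | ℱ (s - 1)] =ᵐ[μ] 0) (lam : ℝ)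

/-- exponential of partial sums -/
noncomputable def eps (dd : ℕ → Ω → ℝ) (lam : ℝ) (j : ℕ) (ω : Ω) : ℝ := Real.exp (lam * psum dd j ω)

include hc hmeas hbdd in
lemma eps_integrable (j : ℕ) : Integrable (eps d lam j) μ := by
  refine integrable_of_bdd (C := Real.exp (|lam| * (j * c)))
    (Measurable.aestronglyMeasurable ?_) ?_
  · exact Real.measurable_exp.comp
      (((psum_meas hmeas j).mono (ℱ.le _) le_rfl).const_mul lam)
  · filter_upwards [psum_abs_le hc hbdd j] with ω hω
    rw [eps, abs_of_pos (Real.exp_pos _)]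
    refine Real.exp_le_exp.mpr ?_
    calc lam * psum d j ω ≤ |lam * psum d j ω| := le_abs_self _
      _ = |lam| * |psum d j ω| := abs_mul _ _
      _ ≤ |lam| * (j * c) := mul_le_mul_of_nonneg_left hω (abs_nonneg lam)

include hc hmeas hbdd in
lemma eps_succ_cond (j : ℕ) :
    μ[eps d lam (j+1) | ℱ j] =ᵐ[μ]
      eps d lam j * μ[fun ω => Real.exp (lam * d (j + 1) ω) | ℱ j] := by
  have hfg : eps d lam (j+1) = eps d lam j * fun ω => Real.exp (lam * d (j + 1) ω) := by
    funext ω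
    simp only [eps, Pi.mul_apply]
    rw [← Real.exp_add]
    congr 1
    rw [psum, Finset.sum_Icc_succ_top (Nat.le_add_left 1 j), psum]
    ring
  rw [hfg]
  exact condExp_mul_of_stronglyMeasurable_left
    ((Real.measurable_exp.comp ((psum_meas hmeas j).const_mul lam)).stronglyMeasurable)
    (by rw [← hfg]; exact eps_integrable hc hmeas hbdd lam (j+1))
    (exp_d_integrable hc hmeas hbdd lam j)

include hc hmeas hbdd hcond in
lemma eps_submartingale : Submartingale (eps d lam) ℱ μ := by
  refine submartingale_nat
    (fun j => (Real.measurable_exp.comp ((psum_meas hmeas j).const_mul lam)).stronglyMeasurable)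
    (fun j => eps_integrable hc hmeas hbdd lam j) (fun j => ?_)
  refine Filter.EventuallyLE.trans ?_ (eps_succ_cond hc hmeas hbdd lam j).symm.le
  filter_upwards [cond_mgf_lower hc hmeas hbdd hcond lam j] with ω h1
  have h0 : 0 ≤ eps d lam j ω := (Real.exp_pos _).le
  calc eps d lam j ω = eps d lam j ω * 1 := (mul_one _).symm
    _ ≤ eps d lam j ω * (μ[fun ω => Real.exp (lam * d (j + 1) ω) | ℱ j]) ω :=
        mul_le_mul_of_nonneg_left h1 h0

include hc hmeas hbdd hcond in
lemma eps_integral_le (n : ℕ) :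
    ∫ ω, eps d lam n ω ∂μ ≤ Real.exp (lam ^ 2 * c ^ 2 * n / 2) := by
  induction n with
  | zero =>
    simp only [eps, psum, Finset.Icc_eq_empty_of_lt Nat.zero_lt_one, Finset.sum_empty,
      mul_zero, Real.exp_zero, integral_const, measure_univ, ENNReal.toReal_one, smul_eq_mul,
      mul_one, Nat.cast_zero]
    norm_num
  | succ n ih =>
    have h1 : ∫ ω, eps d lam (n+1) ω ∂μ = ∫ ω, (μ[eps d lam (n+1) | ℱ n]) ω ∂μ :=
      (integral_condExp (ℱ.le n)).symm
    rw [h1]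
    have h2 : ∫ ω, (μ[eps d lam (n+1) | ℱ n]) ω ∂μ
        ≤ ∫ ω, eps d lam n ω * Real.exp (lam ^ 2 * c ^ 2 / 2) ∂μ := by
      refine integral_mono_ae integrable_condExp
        ((eps_integrable hc hmeas hbdd lam n).mul_const _) ?_
      filter_upwards [eps_succ_cond hc hmeas hbdd lam n,
        cond_mgf_upper hc hmeas hbdd hcond lam n] with ω hω1 hω2
      rw [hω1]
      exact mul_le_mul_of_nonneg_left hω2 (Real.exp_pos _).le
    refine h2.trans ?_
    rw [integral_mul_const]
    calc (∫ ω, eps d lam n ω ∂μ) * Real.exp (lam ^ 2 * c ^ 2 / 2)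
        ≤ Real.exp (lam ^ 2 * c ^ 2 * n / 2) * Real.exp (lam ^ 2 * c ^ 2 / 2) :=
          mul_le_mul_of_nonneg_right ih (Real.exp_pos _).le
      _ = Real.exp (lam ^ 2 * c ^ 2 * (n+1) / 2) := by rw [← Real.exp_add]; ring_nf
    push_cast
    ring_nf
    exact le_rfl

include hc hmeas hbdd hcond in
lemma azuma_onesided (n : ℕ) (hn : 1 ≤ n) (a : ℝ) (ha : 0 < a) :
    μ {ω | ∃ k, k ≤ n ∧ a ≤ psum d k ω} ≤
      ENNReal.ofReal (Real.exp (-(a ^ 2) / (2 * n * c ^ 2))) := by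
  set lam := a / (n * c ^ 2) with hlam
  have hnpos : (0:ℝ) < n := by exact_mod_cast hn
  have hlampos : 0 < lam := div_pos ha (by positivity)
  set ε : NNReal := (Real.exp (lam * a)).toNNReal with hε
  have hεcoe : (ε : ℝ) = Real.exp (lam * a) := Real.coe_toNNReal _ (Real.exp_pos _).le
  have hsub := eps_submartingale hc hmeas hbdd hcond lam
  have hnonneg : 0 ≤ eps d lam := fun j ω => (Real.exp_pos _).le
  have hmax := maximal_ineq hsub hnonneg (ε := ε) n
  set Sset := {ω | (ε : ℝ) ≤ (Finset.range (n + 1)).sup' Finset.nonempty_range_add_one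
    fun k => eps d lam k ω} with hSset
  have hincl : {ω | ∃ k, k ≤ n ∧ a ≤ psum d k ω} ⊆ Sset := by
    rintro ω ⟨k, hk, hak⟩
    have h1 : Real.exp (lam * a) ≤ eps d lam k ω :=
      Real.exp_le_exp.mpr (mul_le_mul_of_nonneg_left hak hlampos.le)
    have h2 : eps d lam k ω ≤ (Finset.range (n+1)).sup' Finset.nonempty_range_add_one
        (fun k => eps d lam k ω) :=
      Finset.le_sup' (fun k => eps d lam k ω) (Finset.mem_range.mpr (Nat.lt_succ_of_le hk))
    simp only [hSset, Set.mem_setOf_eq, hεcoe]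
    linarith
  have hint1 : ∫ ω in Sset, eps d lam n ω ∂μ ≤ Real.exp (lam ^ 2 * c ^ 2 * n / 2) :=
    (setIntegral_le_integral (s := Sset) (eps_integrable hc hmeas hbdd lam n)
      (Filter.Eventually.of_forall fun ω => (Real.exp_pos _).le)).trans
      (eps_integral_le hc hmeas hbdd hcond lam n)
  have hSle : (ε : ℝ≥0∞) * μ Sset ≤ ENNReal.ofReal (Real.exp (lam ^ 2 * c ^ 2 * n / 2)) :=
    le_trans (by simpa [ENNReal.smul_def] using hmax) (ENNReal.ofReal_le_ofReal hint1)
  have hε0 : (ε : ℝ≥0∞) ≠ 0 := by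
    simp only [hε, ne_eq, ENNReal.coe_eq_zero, Real.toNNReal_eq_zero, not_le]
    exact Real.exp_pos _
  have hεtop : (ε : ℝ≥0∞) ≠ ⊤ := ENNReal.coe_ne_top
  have hdiv : μ Sset ≤ ENNReal.ofReal (Real.exp (lam ^ 2 * c ^ 2 * n / 2)) / (ε : ℝ≥0∞) := by
    rw [ENNReal.le_div_iff_mul_le (Or.inl hε0) (Or.inl hεtop), mul_comm]
    exact hSle
  have hcoe : (ε : ℝ≥0∞) = ENNReal.ofReal (Real.exp (lam * a)) := rfl
  have hfinal : ENNReal.ofReal (Real.exp (lam ^ 2 * c ^ 2 * n / 2)) / (ε : ℝ≥0∞)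
      = ENNReal.ofReal (Real.exp (-(a ^ 2) / (2 * n * c ^ 2))) := by
    rw [hcoe, ← ENNReal.ofReal_div_of_pos (Real.exp_pos _), ← Real.exp_sub]
    congr 1
    rw [hlam]
    field_simp
    ring
  exact (measure_mono hincl).trans (hdiv.trans_eq hfinal)

include hc hmeas hbdd hcond in
lemma azuma_twosided (n : ℕ) (hn : 1 ≤ n) (a : ℝ) (ha : 0 < a) :
    μ {ω | ∃ k, k ≤ n ∧ a ≤ |psum d k ω|} ≤
      ENNReal.ofReal (2 * Real.exp (-(a ^ 2) / (2 * n * c ^ 2))) := by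
  have hmeas' : ∀ s, Measurable[ℱ s] (fun ω => -(d s ω)) := fun s => (hmeas s).neg
  have hbdd' : ∀ s, 1 ≤ s → ∀ᵐ ω ∂μ, |(fun ω => -(d s ω)) ω| ≤ c := fun s hs => by
    filter_upwards [hbdd s hs] with ω hω; simpa using hω
  have hcond' : ∀ s, 1 ≤ s → μ[fun ω => -(d s ω) | ℱ (s-1)] =ᵐ[μ] 0 := fun s hs => by
    have h := condExp_neg (μ := μ) (m := ℱ (s-1)) (d s)
    refine h.trans ?_
    filter_upwards [hcond s hs] with ω hω
    simp [hω]
  have h1 := azuma_onesided hc hmeas hbdd hcond n hn a ha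
  have h2 := azuma_onesided hc hmeas' hbdd' hcond' n hn a ha
  have hpsum_neg : ∀ k ω, psum (fun s ω => -(d s ω)) k ω = -(psum d k ω) := fun k ω => by
    simp [psum]
  have hincl : {ω | ∃ k, k ≤ n ∧ a ≤ |psum d k ω|} ⊆
      {ω | ∃ k, k ≤ n ∧ a ≤ psum d k ω} ∪
      {ω | ∃ k, k ≤ n ∧ a ≤ psum (fun s ω => -(d s ω)) k ω} := by
    rintro ω ⟨k, hk, hak⟩
    rcases le_abs.mp hak with h | h
    · exact Or.inl ⟨k, hk, h⟩
    · exact Or.inr ⟨k, hk, by rw [hpsum_neg]; exact h⟩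
  calc μ {ω | ∃ k, k ≤ n ∧ a ≤ |psum d k ω|}
      ≤ μ ({ω | ∃ k, k ≤ n ∧ a ≤ psum d k ω} ∪
          {ω | ∃ k, k ≤ n ∧ a ≤ psum (fun s ω => -(d s ω)) k ω}) := measure_mono hincl
    _ ≤ μ {ω | ∃ k, k ≤ n ∧ a ≤ psum d k ω} +
        μ {ω | ∃ k, k ≤ n ∧ a ≤ psum (fun s ω => -(d s ω)) k ω} := measure_union_le _ _
    _ ≤ ENNReal.ofReal (Real.exp (-(a ^ 2) / (2 * n * c ^ 2))) +
        ENNReal.ofReal (Real.exp (-(a ^ 2) / (2 * n * c ^ 2))) := add_le_add h1 h2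
    _ = ENNReal.ofReal (2 * Real.exp (-(a ^ 2) / (2 * n * c ^ 2))) := by
        rw [← ENNReal.ofReal_add (Real.exp_pos _).le (Real.exp_pos _).le]; ring_nf

end azuma
end Azuma
end AzumaAux

/-- The setting of sequential active prediction-powered mean estimation:
a probability space with filtration `ℱ`, horizon `T`, i.i.d. covariate–label pairs
`(x t, y t)` independent of the past, an `ℱ (t-1)`-measurable prediction model `f t`
and query probability map `π t`, and a query indicator `ξ t` that is `Bernoulli (π t (x t))`
conditionally on the past and `(x t, y t)` (which also encodes conditional independence of
`ξ t` from `y t` given the past and `x t`). -/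
structure ActiveMeanSetup (Ω : Type*) [m0 : MeasurableSpace Ω] where
  μ : Measure Ω
  isProb : IsProbabilityMeasure μ
  ℱ : Filtration ℕ m0
  T : ℕ
  x : ℕ → Ω → ℝ
  y : ℕ → Ω → ℝ
  f : ℕ → Ω → ℝ → ℝ
  π : ℕ → Ω → ℝ → ℝ
  ξ : ℕ → Ω → ℝ
  /-- `(x t, y t)` is `ℱ t`-measurable. -/
  hx : ∀ t, Measurable[ℱ t] (x t)
  hy : ∀ t, Measurable[ℱ t] (y t)
  hξmeas : ∀ t, Measurable[ℱ t] (ξ t)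
  /-- the prediction model `f t` is an `ℱ (t-1)`-measurable random function -/
  hf : ∀ t, @Measurable (Ω × ℝ) ℝ ((ℱ (t - 1)).prod (borel ℝ)) _ (Function.uncurry (f t))
  /-- the query probability map `π t` is an `ℱ (t-1)`-measurable random function -/
  hπmeas : ∀ t, @Measurable (Ω × ℝ) ℝ ((ℱ (t - 1)).prod (borel ℝ)) _ (Function.uncurry (π t))
  /-- the query probability lies in `(0, 1]` -/
  hπ_pos : ∀ t ω, 0 < π t ω (x t ω)
  hπ_le_one : ∀ t ω, π t ω (x t ω) ≤ 1
  /-- `(x t, y t)` is independent of `ℱ (t-1)` -/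
  hindep : ∀ t,
    Indep (MeasurableSpace.comap (fun ω => (x t ω, y t ω)) inferInstance) (ℱ (t - 1)) μ
  /-- the pairs `(x t, y t)` are identically distributed -/
  hident : ∀ s t,
    Measure.map (fun ω => (x s ω, y s ω)) μ = Measure.map (fun ω => (x t ω, y t ω)) μ
  /-- `ξ t` is `{0,1}`-valued -/
  hξ01 : ∀ t, ∀ᵐ ω ∂μ, ξ t ω = 0 ∨ ξ t ω = 1
  /-- conditionally on `ℱ (t-1)` and `(x t, y t)`, the indicator `ξ t` has conditional mean
  `π t (x t)`: this says `ξ t ∼ Bernoulli (π t (x t))` given the past and `x t`, and that it is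
  conditionally independent of `y t` given the past and `x t`. -/
  hξcond : ∀ t,
    μ[ξ t | (ℱ (t - 1)) ⊔ MeasurableSpace.comap (fun ω => (x t ω, y t ω)) inferInstance]
      =ᵐ[μ] fun ω => π t ω (x t ω)
  /-- integrability of the labels -/
  hyint : ∀ t, Integrable (y t) μ
  /-- integrability of the update direction -/
  hgint : ∀ t, Integrable
    (fun ω => f t ω (x t ω) + (y t ω - f t ω (x t ω)) * ξ t ω / π t ω (x t ω)) μ

variable {Ω : Type*} [MeasurableSpace Ω]

/-- the update direction `g_t = f_t(x_t) + (y_t − f_t(x_t)) ξ_t / π_t(x_t)` -/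
noncomputable def g (S : ActiveMeanSetup Ω) (t : ℕ) (ω : Ω) : ℝ :=
  S.f t ω (S.x t ω) + (S.y t ω - S.f t ω (S.x t ω)) * S.ξ t ω / S.π t ω (S.x t ω)

/-- the common mean `μ_y = E[y_t]` of the labels -/
noncomputable def μy (S : ActiveMeanSetup Ω) : ℝ := ∫ ω, S.y 1 ω ∂S.μ


/-- the conditional variance `σ_t² = E[(g_t − μ_y)² | ℱ_{t−1}]` -/
noncomputable def condVar (S : ActiveMeanSetup Ω) (t : ℕ) : Ω → ℝ :=
  S.μ[fun ω => (g S t ω - μy S) ^ 2 | S.ℱ (t - 1)]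

/-- the online update: `w_1 = 0` and `w_{t+1} = w_t + g_t / T`, i.e.
`w_{t+1} = (1/T) Σ_{s=1}^t g_s`. -/
noncomputable def w (S : ActiveMeanSetup Ω) (t : ℕ) (ω : Ω) : ℝ :=
  (1 / (S.T : ℝ)) * ∑ s ∈ Finset.Icc 1 (t - 1), g S s ω

section SetupLemmas

open MeasureTheory ProbabilityTheory
open scoped ENNReal

variable {Ω : Type*} [m0 : MeasurableSpace Ω]

lemma g_meas (S : ActiveMeanSetup Ω) (t : ℕ) : Measurable[S.ℱ t] (g S t) := by
  have hid : @Measurable Ω Ω (S.ℱ t) (S.ℱ (t - 1)) id :=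
    measurable_id'' (S.ℱ.mono (Nat.sub_le t 1))
  have hpair : @Measurable Ω (Ω × ℝ) (S.ℱ t) ((S.ℱ (t - 1)).prod (borel ℝ))
      (fun ω => (ω, S.x t ω)) := Measurable.prodMk hid (S.hx t)
  have hfx : Measurable[S.ℱ t] (fun ω => S.f t ω (S.x t ω)) := (S.hf t).comp hpair
  have hπx : Measurable[S.ℱ t] (fun ω => S.π t ω (S.x t ω)) := (S.hπmeas t).comp hpair
  exact hfx.add ((((S.hy t).sub hfx).mul (S.hξmeas t)).div hπx)

lemma g_measM (S : ActiveMeanSetup Ω) (t : ℕ) : Measurable (g S t) :=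
  (g_meas S t).mono (S.ℱ.le t) le_rfl

lemma integral_y_eq (S : ActiveMeanSetup Ω) (t : ℕ) :
    ∫ ω, S.y t ω ∂S.μ = μy S := by
  have hxy : ∀ u : ℕ, Measurable (fun ω => (S.x u ω, S.y u ω)) := fun u =>
    Measurable.prodMk ((S.hx u).mono (S.ℱ.le u) le_rfl) ((S.hy u).mono (S.ℱ.le u) le_rfl)
  have h : ∀ u : ℕ, ∫ ω, S.y u ω ∂S.μ
      = ∫ p, p.2 ∂(Measure.map (fun ω => (S.x u ω, S.y u ω)) S.μ) := fun u => by
    rw [integral_map (hxy u).aemeasurable measurable_snd.aestronglyMeasurable]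
  rw [μy, h t, h 1, S.hident t 1]

/-- the σ-algebra generated by `(x_t, y_t)` -/
def mcomap (S : ActiveMeanSetup Ω) (t : ℕ) : MeasurableSpace Ω :=
  MeasurableSpace.comap (fun ω => (S.x t ω, S.y t ω)) inferInstance

/-- the σ-algebra generated by the past and `(x_t, y_t)` -/
def mjoin (S : ActiveMeanSetup Ω) (t : ℕ) : MeasurableSpace Ω :=
  S.ℱ (t - 1) ⊔ mcomap S t

lemma xy_meas (S : ActiveMeanSetup Ω) (t : ℕ) :
    Measurable (fun ω => (S.x t ω, S.y t ω)) :=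
  Measurable.prodMk ((S.hx t).mono (S.ℱ.le t) le_rfl) ((S.hy t).mono (S.ℱ.le t) le_rfl)

lemma mcomap_le (S : ActiveMeanSetup Ω) (t : ℕ) : mcomap S t ≤ m0 :=
  (xy_meas S t).comap_le

lemma mjoin_le (S : ActiveMeanSetup Ω) (t : ℕ) : mjoin S t ≤ m0 :=
  sup_le (S.ℱ.le _) (mcomap_le S t)

lemma xy_meas_mc (S : ActiveMeanSetup Ω) (t : ℕ) :
    Measurable[mcomap S t] (fun ω => (S.x t ω, S.y t ω)) :=
  Measurable.of_comap_le le_rfl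

lemma x_meas_mjoin (S : ActiveMeanSetup Ω) (t : ℕ) : Measurable[mjoin S t] (S.x t) :=
  (measurable_fst.comp (xy_meas_mc S t)).mono le_sup_right le_rfl

lemma y_meas_mjoin (S : ActiveMeanSetup Ω) (t : ℕ) : Measurable[mjoin S t] (S.y t) :=
  (measurable_snd.comp (xy_meas_mc S t)).mono le_sup_right le_rfl

lemma pair_meas_mjoin (S : ActiveMeanSetup Ω) (t : ℕ) :
    @Measurable Ω (Ω × ℝ) (mjoin S t) ((S.ℱ (t - 1)).prod (borel ℝ))
      (fun ω => (ω, S.x t ω)) :=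
  Measurable.prodMk (measurable_id'' le_sup_left) (x_meas_mjoin S t)

lemma f_meas_mjoin (S : ActiveMeanSetup Ω) (t : ℕ) :
    Measurable[mjoin S t] (fun ω => S.f t ω (S.x t ω)) :=
  (S.hf t).comp (pair_meas_mjoin S t)

lemma pi_meas_mjoin (S : ActiveMeanSetup Ω) (t : ℕ) :
    Measurable[mjoin S t] (fun ω => S.π t ω (S.x t ω)) :=
  (S.hπmeas t).comp (pair_meas_mjoin S t)

lemma condExp_g (S : ActiveMeanSetup Ω) (t : ℕ) :
    S.μ[g S t | S.ℱ (t - 1)] =ᵐ[S.μ] fun _ => μy S := by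
  haveI : IsProbabilityMeasure S.μ := S.isProb
  have hu𝒢 := f_meas_mjoin S t
  have hπ𝒢 := pi_meas_mjoin S t
  have hy𝒢 := y_meas_mjoin S t
  have hv𝒢 : Measurable[mjoin S t]
      (fun ω => S.f t ω (S.x t ω) + (S.y t ω - S.f t ω (S.x t ω)) / S.π t ω (S.x t ω)) :=
    hu𝒢.add ((hy𝒢.sub hu𝒢).div hπ𝒢)
  -- the conditional expectation of ξ given the join σ-algebra
  have hξc : S.μ[S.ξ t | mjoin S t] =ᵐ[S.μ] fun ω => S.π t ω (S.x t ω) := S.hξcond t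
  -- a.e. decomposition g = u·(1-ξ) + v·ξ
  have hdecomp : g S t =ᵐ[S.μ]
      fun ω => S.f t ω (S.x t ω) * (1 - S.ξ t ω)
        + (S.f t ω (S.x t ω) + (S.y t ω - S.f t ω (S.x t ω)) / S.π t ω (S.x t ω)) * S.ξ t ω := by
    filter_upwards [S.hξ01 t] with ω hω
    rcases hω with h | h <;> rw [g, h]
    · ring
    · have hπ := (S.hπ_pos t ω).ne'
      field_simp
      ring
  -- integrability facts
  have hξmeasM : Measurable (S.ξ t) := (S.hξmeas t).mono (S.ℱ.le t) le_rfl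
  have hξint : Integrable (S.ξ t) S.μ := by
    refine integrable_of_bdd (C := 1) hξmeasM.aestronglyMeasurable ?_
    filter_upwards [S.hξ01 t] with ω hω
    rcases hω with h | h <;> simp [h]
  have hu_meas : Measurable (fun ω => S.f t ω (S.x t ω)) :=
    (f_meas_mjoin S t).mono (mjoin_le S t) le_rfl
  have hv_meas : Measurable
      (fun ω => S.f t ω (S.x t ω) + (S.y t ω - S.f t ω (S.x t ω)) / S.π t ω (S.x t ω)) :=
    (hv𝒢).mono (mjoin_le S t) le_rfl
  have hgabs : Integrable (fun ω => |g S t ω|) S.μ := (S.hgint t).abs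
  have h1 : Integrable (fun ω => S.f t ω (S.x t ω) * (1 - S.ξ t ω)) S.μ := by
    refine hgabs.mono' ((hu_meas.mul (measurable_const.sub hξmeasM)).aestronglyMeasurable) ?_
    filter_upwards [S.hξ01 t] with ω hω
    rcases hω with h | h
    · have : g S t ω = S.f t ω (S.x t ω) := by rw [g, h]; ring
      simp [h, Real.norm_eq_abs, this]
    · simp [h, Real.norm_eq_abs, abs_nonneg]
  have h2 : Integrable
      (fun ω => (S.f t ω (S.x t ω) + (S.y t ω - S.f t ω (S.x t ω)) / S.π t ω (S.x t ω))
        * S.ξ t ω) S.μ := by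
    refine hgabs.mono' ((hv_meas.mul hξmeasM).aestronglyMeasurable) ?_
    filter_upwards [S.hξ01 t] with ω hω
    rcases hω with h | h
    · simp [h, Real.norm_eq_abs, abs_nonneg]
    · have : g S t ω
          = S.f t ω (S.x t ω) + (S.y t ω - S.f t ω (S.x t ω)) / S.π t ω (S.x t ω) := by
        rw [g, h]; ring
      simp [h, Real.norm_eq_abs, this]
  -- conditional expectation given the join σ-algebra equals y
  have hce1 : S.μ[g S t | mjoin S t] =ᵐ[S.μ] S.y t := by
    refine (condExp_congr_ae hdecomp).trans ?_
    have hsplit : (fun ω => S.f t ω (S.x t ω) * (1 - S.ξ t ω)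
        + (S.f t ω (S.x t ω) + (S.y t ω - S.f t ω (S.x t ω)) / S.π t ω (S.x t ω)) * S.ξ t ω)
        = (fun ω => S.f t ω (S.x t ω)) * (fun ω => 1 - S.ξ t ω)
          + (fun ω => S.f t ω (S.x t ω)
              + (S.y t ω - S.f t ω (S.x t ω)) / S.π t ω (S.x t ω)) * S.ξ t := rfl
    rw [hsplit]
    have h1' : Integrable ((fun ω => S.f t ω (S.x t ω)) * fun ω => 1 - S.ξ t ω) S.μ := h1
    have h2' : Integrable ((fun ω => S.f t ω (S.x t ω)
        + (S.y t ω - S.f t ω (S.x t ω)) / S.π t ω (S.x t ω)) * S.ξ t) S.μ := h2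
    refine (condExp_add h1' h2' _).trans ?_
    have e3 := condExp_mul_of_stronglyMeasurable_left (μ := S.μ) hu𝒢.stronglyMeasurable h1'
      ((integrable_const 1).sub hξint)
    have e5 := condExp_mul_of_stronglyMeasurable_left (μ := S.μ) hv𝒢.stronglyMeasurable h2' hξint
    have e4 : S.μ[(fun ω => 1 - S.ξ t ω) | mjoin S t]
        =ᵐ[S.μ] fun ω => 1 - S.π t ω (S.x t ω) := by
      have : (fun ω => 1 - S.ξ t ω) = (fun _ => (1:ℝ)) - S.ξ t := rfl
      rw [this]
      refine (condExp_sub (integrable_const 1) hξint _).trans ?_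
      rw [condExp_const (mjoin_le S t) (1:ℝ)]
      filter_upwards [hξc] with ω hω
      simp [hω]
    filter_upwards [e3, e4, e5, hξc] with ω h3 h4 h5 hξ
    simp only [Pi.add_apply, Pi.mul_apply] at h3 h5 ⊢
    rw [h3, h5, h4, hξ]
    have hπ := (S.hπ_pos t ω).ne'
    field_simp
    ring
  -- tower property and independence
  have htower : S.μ[S.μ[g S t | mjoin S t] | S.ℱ (t - 1)] =ᵐ[S.μ] S.μ[g S t | S.ℱ (t - 1)] :=
    condExp_condExp_of_le le_sup_left (mjoin_le S t)
  have hcongr : S.μ[S.μ[g S t | mjoin S t] | S.ℱ (t - 1)] =ᵐ[S.μ] S.μ[S.y t | S.ℱ (t - 1)] :=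
    condExp_congr_ae hce1
  have hind : S.μ[S.y t | S.ℱ (t - 1)] =ᵐ[S.μ] fun _ => ∫ ω, S.y t ω ∂S.μ :=
    condExp_indep_eq (mcomap_le S t) (S.ℱ.le (t - 1))
      ((measurable_snd.comp (xy_meas_mc S t)).stronglyMeasurable) (S.hindep t)
  refine htower.symm.trans (hcongr.trans (hind.trans ?_))
  rw [integral_y_eq S t]

end SetupLemmas


set_option maxHeartbeats 2000000 in
/-- If `|g_t| ≤ G` a.s. for all `t`, then `Σ_{s=1}^t σ_s² ≤ 2t(G² + μ_y²)` a.s. for every `t`;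
consequently, for `T ≥ 4` and any `δ ∈ (0, 1/e)`, with probability at least `1 − δ`,
simultaneously for all `t ∈ [T]`,
`|w_{t+1} − μ_y| ≤ (2 max{2 √(2t(G² + μ_y²)), (G + |μ_y|) √(log(log T / δ))}
  √(log(log T / δ))) / T + (1 − t/T) |μ_y|`, a bound of order `√t / T = O(1/√t)` for `t` of
order `T`. -/
theorem trivial_variance_bound (S : ActiveMeanSetup Ω) (hT : 4 ≤ S.T)
    (G : ℝ) (hG : 0 < G) (hbound : ∀ t, ∀ᵐ ω ∂S.μ, |g S t ω| ≤ G)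
    (δ : ℝ) (hδ0 : 0 < δ) (hδ1 : δ < 1 / Real.exp 1) :
    (∀ t, ∀ᵐ ω ∂S.μ,
      ∑ s ∈ Finset.Icc 1 t, condVar S s ω ≤ 2 * t * (G ^ 2 + (μy S) ^ 2)) ∧
      ENNReal.ofReal (1 - δ) ≤
        S.μ {ω | ∀ t ∈ Finset.Icc 1 S.T,
          |w S (t + 1) ω - μy S| ≤
            2 * max (2 * Real.sqrt (2 * t * (G ^ 2 + (μy S) ^ 2)))
                ((G + |μy S|) * Real.sqrt (Real.log (Real.log S.T / δ)))
              * Real.sqrt (Real.log (Real.log S.T / δ)) / (S.T : ℝ)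
            + (1 - (t : ℝ) / (S.T : ℝ)) * |μy S|} := by
  haveI : IsProbabilityMeasure S.μ := S.isProb
  have habs_mu : 0 ≤ |μy S| := abs_nonneg _
  set Q : ℝ := G ^ 2 + (μy S) ^ 2 with hQdef
  have hQpos : 0 < Q := add_pos_of_pos_of_nonneg (pow_pos hG 2) (sq_nonneg _)
  set c : ℝ := G + |μy S| with hcdef
  have hcpos : 0 < c := add_pos_of_pos_of_nonneg hG habs_mu
  have hc2Q : c ^ 2 ≤ 2 * Q := by
    rw [hcdef, hQdef]
    nlinarith [sq_abs (μy S), sq_nonneg (G - |μy S|)]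
  -- per-step bound on the conditional variance
  have hvar1 : ∀ s : ℕ, ∀ᵐ ω ∂S.μ, condVar S s ω ≤ 2 * Q := by
    intro s
    have hsqint : Integrable (fun ω => (g S s ω - μy S) ^ 2) S.μ := by
      refine integrable_of_bdd (C := c ^ 2)
        ((((g_measM S s).sub measurable_const).pow_const 2).aestronglyMeasurable) ?_
      filter_upwards [hbound s] with ω hω
      have habs : |g S s ω - μy S| ≤ c := by
        calc |g S s ω - μy S| ≤ |g S s ω| + |μy S| := abs_sub _ _
          _ ≤ G + |μy S| := by linarith
      rw [abs_of_nonneg (sq_nonneg _), ← sq_abs]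
      exact pow_le_pow_left₀ (abs_nonneg _) habs 2
    have hae : (fun ω => (g S s ω - μy S) ^ 2) ≤ᵐ[S.μ] fun _ => 2 * Q := by
      filter_upwards [hbound s] with ω hω
      have habs : |g S s ω - μy S| ≤ c := by
        calc |g S s ω - μy S| ≤ |g S s ω| + |μy S| := abs_sub _ _
          _ ≤ G + |μy S| := by linarith
      have h2 : (g S s ω - μy S) ^ 2 ≤ c ^ 2 := by
        rw [← sq_abs]; exact pow_le_pow_left₀ (abs_nonneg _) habs 2
      linarith
    have hmono := condExp_mono (m := S.ℱ (s - 1)) hsqint (integrable_const (2 * Q)) hae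
    rw [condExp_const (S.ℱ.le (s - 1)) (2 * Q)] at hmono
    exact hmono
  have hvar : ∀ t : ℕ, ∀ᵐ ω ∂S.μ,
      ∑ s ∈ Finset.Icc 1 t, condVar S s ω ≤ 2 * t * Q := by
    intro t
    have hall : ∀ᵐ ω ∂S.μ, ∀ s : ℕ, s ∈ Finset.Icc 1 t → condVar S s ω ≤ 2 * Q := by
      rw [MeasureTheory.ae_all_iff]
      intro s
      filter_upwards [hvar1 s] with ω hω _ using hω
    filter_upwards [hall] with ω hω
    calc ∑ s ∈ Finset.Icc 1 t, condVar S s ω ≤ ∑ s ∈ Finset.Icc 1 t, 2 * Q :=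
          Finset.sum_le_sum hω
      _ = t * (2 * Q) := by rw [Finset.sum_const, Nat.card_Icc]; simp [nsmul_eq_mul]
      _ = 2 * t * Q := by ring
  refine ⟨hvar, ?_⟩
  -- now the concentration part
  set L : ℝ := Real.log (Real.log S.T / δ) with hLdef
  have hT4 : (4 : ℝ) ≤ (S.T : ℝ) := by exact_mod_cast hT
  have hTpos : (0 : ℝ) < S.T := by linarith
  have hlog4 : (1 : ℝ) < Real.log 4 := by
    rw [show (4:ℝ) = 2^2 by norm_num, Real.log_pow]
    have := Real.log_two_gt_d9
    push_cast
    linarith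
  have hlogT : 1 < Real.log S.T :=
    lt_of_lt_of_le hlog4 (Real.log_le_log (by norm_num) hT4)
  have hδe : δ * Real.exp 1 < 1 := by
    calc δ * Real.exp 1 < (1 / Real.exp 1) * Real.exp 1 :=
          mul_lt_mul_of_pos_right hδ1 (Real.exp_pos 1)
      _ = 1 := by field_simp
  have hratio : Real.exp 1 < Real.log S.T / δ := by
    have h1 : Real.exp 1 < 1 / δ := by
      rw [lt_div_iff₀ hδ0, mul_comm]; exact hδe
    have h2 : 1 / δ ≤ Real.log S.T / δ := (div_le_div_iff_of_pos_right hδ0).mpr hlogT.le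
    linarith
  have hratio_pos : 0 < Real.log S.T / δ := lt_trans (Real.exp_pos 1) hratio
  have hL1 : 1 < L := by
    rw [hLdef]
    exact (Real.lt_log_iff_exp_lt hratio_pos).mpr hratio
  have hLpos : 0 < L := by linarith
  have hexpL : Real.exp L = Real.log S.T / δ := Real.exp_log hratio_pos
  have hexpnegL : Real.exp (-L) = δ / Real.log S.T := by
    rw [Real.exp_neg, hexpL, inv_div]
  -- differences and their properties
  set d : ℕ → Ω → ℝ := fun s ω => g S s ω - μy S with hddef
  have hdmeas : ∀ s, Measurable[S.ℱ s] (d s) := fun s =>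
    (g_meas S s).sub measurable_const
  have hdbdd : ∀ s, 1 ≤ s → ∀ᵐ ω ∂S.μ, |d s ω| ≤ c := by
    intro s _
    filter_upwards [hbound s] with ω hω
    calc |d s ω| ≤ |g S s ω| + |μy S| := abs_sub _ _
      _ ≤ G + |μy S| := by linarith
  have hdcond : ∀ s, 1 ≤ s → S.μ[d s | S.ℱ (s - 1)] =ᵐ[S.μ] 0 := by
    intro s _
    have hsub : d s = g S s - fun _ => μy S := rfl
    rw [hsub]
    have hgint' : Integrable (g S s) S.μ := S.hgint s
    refine (condExp_sub hgint' (integrable_const _) _).trans ?_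
    rw [condExp_const (S.ℱ.le (s - 1)) (μy S)]
    filter_upwards [condExp_g S s] with ω hω
    simp [hω]
  -- epochs
  set K : ℕ := Nat.log 2 S.T with hKdef
  set N : ℕ → ℕ := fun k => min (2 ^ (k + 1) - 1) S.T with hNdef
  set A : ℕ → ℝ := fun k => 4 * Real.sqrt (2 * (2:ℝ) ^ k * Q) * Real.sqrt L with hAdef
  set B : ℕ → Set Ω := fun k => {ω | ∃ j, j ≤ N k ∧ A k ≤ |psum d j ω|} with hBdef
  have hNge1 : ∀ k, 1 ≤ N k := by
    intro k
    refine le_min ?_ (by omega)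
    have : 2 ≤ 2 ^ (k+1) := Nat.le_self_pow (by omega) 2 |>.trans_eq rfl
    omega
  have hApos : ∀ k, 0 < A k := by
    intro k
    rw [hAdef]
    have h1 : 0 < 2 * (2:ℝ) ^ k * Q := by positivity
    positivity
  have hBk : ∀ k, S.μ (B k) ≤ ENNReal.ofReal (2 * Real.exp (-(4 * L))) := by
    intro k
    have hc2 := azuma_twosided (ℱ := S.ℱ) hcpos hdmeas hdbdd hdcond (N k) (hNge1 k)
      (A k) (hApos k)
    refine le_trans hc2 (ENNReal.ofReal_le_ofReal ?_)
    have hexps : -(A k ^ 2) / (2 * (N k : ℝ) * c ^ 2) ≤ -(4 * L) := by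
      have hNpos : (0:ℝ) < (N k : ℝ) := by exact_mod_cast hNge1 k
      have hA2 : A k ^ 2 = 16 * (2 * (2:ℝ) ^ k * Q) * L := by
        rw [hAdef]
        have h1 : (0:ℝ) ≤ 2 * (2:ℝ) ^ k * Q := by positivity
        rw [mul_pow, mul_pow, Real.sq_sqrt h1, Real.sq_sqrt hLpos.le]
        ring
      have hNle : (N k : ℝ) ≤ 2 * (2:ℝ) ^ k := by
        have h1 : N k ≤ 2 ^ (k + 1) - 1 := min_le_left _ _
        have h2 : (N k : ℝ) ≤ ((2 ^ (k + 1) - 1 : ℕ) : ℝ) := by exact_mod_cast h1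
        have h3 : ((2 ^ (k + 1) - 1 : ℕ) : ℝ) = 2 * (2:ℝ) ^ k - 1 := by
          have : 1 ≤ 2 ^ (k+1) := Nat.one_le_two_pow
          push_cast [this]
          ring
        rw [h3] at h2
        linarith
      rw [div_le_iff₀ (by positivity), neg_mul, neg_le_neg_iff, hA2]
      have h1 : (N k : ℝ) * c ^ 2 ≤ (2 * (2:ℝ) ^ k) * (2 * Q) :=
        mul_le_mul hNle hc2Q (sq_nonneg c) (by positivity)
      nlinarith [mul_le_mul_of_nonneg_left h1 hLpos.le]
    have := Real.exp_le_exp.mpr hexps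
    linarith
  -- union bound
  have hUnion : S.μ (⋃ k ∈ Finset.range (K + 1), B k) ≤ ENNReal.ofReal δ := by
    refine le_trans (measure_biUnion_finset_le _ _) ?_
    refine le_trans (Finset.sum_le_sum (fun k _ => hBk k)) ?_
    rw [Finset.sum_const, Finset.card_range, nsmul_eq_mul,
      ← ENNReal.ofReal_natCast (K + 1), ← ENNReal.ofReal_mul (by positivity)]
    refine ENNReal.ofReal_le_ofReal ?_
    -- numeric inequality
    have hl2 : (0.6931 : ℝ) < Real.log 2 := by
      linarith [Real.log_two_gt_d9]
    have hl2pos : (0:ℝ) < Real.log 2 := by linarith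
    have hE : (2.718 : ℝ) < Real.exp 1 := by
      linarith [Real.exp_one_gt_d9]
    have hKle : (K : ℝ) * Real.log 2 ≤ Real.log S.T := by
      have h2K : (2:ℕ) ^ K ≤ S.T := Nat.pow_log_le_self 2 (by omega)
      have h2K' : ((2:ℝ)) ^ K ≤ (S.T : ℝ) := by exact_mod_cast h2K
      calc (K : ℝ) * Real.log 2 = Real.log ((2:ℝ) ^ K) := by rw [Real.log_pow]; try push_cast; try ring
        _ ≤ Real.log S.T := Real.log_le_log (by positivity) h2K'
    have hlog4T : 2 * Real.log 2 ≤ Real.log S.T := by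
      have h4 : Real.log 4 ≤ Real.log S.T := Real.log_le_log (by norm_num) hT4
      rw [show (4:ℝ) = 2 ^ 2 by norm_num, Real.log_pow] at h4
      push_cast at h4
      linarith
    have hxpos : (0:ℝ) < Real.log S.T := by linarith
    have hK1 : (K : ℝ) + 1 ≤ 3 * Real.log S.T / (2 * Real.log 2) := by
      have h1 : (K : ℝ) ≤ Real.log S.T / Real.log 2 := (le_div_iff₀ hl2pos).mpr hKle
      have h2 : 1 ≤ Real.log S.T / (2 * Real.log 2) :=
        (one_le_div (by positivity)).mpr hlog4T
      have h3 : 3 * Real.log S.T / (2 * Real.log 2)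
          = Real.log S.T / Real.log 2 + Real.log S.T / (2 * Real.log 2) := by
        field_simp
        ring
      linarith
    have hexp4 : Real.exp (-(4 * L)) = (δ / Real.log S.T) ^ 4 := by
      rw [show -(4 * L) = (4:ℕ) * (-L) by push_cast; ring, Real.exp_nat_mul, hexpnegL]
    have key : 3 * δ ^ 3 ≤ Real.log 2 * Real.log S.T ^ 3 := by
      have h1 : δ ^ 3 * Real.exp 1 ^ 3 < 1 := by
        have h0 : (δ * Real.exp 1) ^ 3 < 1 :=
          pow_lt_one₀ (by positivity) hδe (by norm_num)
        rw [mul_pow] at h0; exact h0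
      have h2 : (2 * Real.log 2) ^ 3 ≤ Real.log S.T ^ 3 :=
        pow_le_pow_left₀ (by positivity) hlog4T 3
      have hl2' : (0.6931 : ℝ) ^ 4 ≤ Real.log 2 ^ 4 :=
        pow_le_pow_left₀ (by norm_num) hl2.le 4
      have hE' : (2.718 : ℝ) ^ 3 ≤ Real.exp 1 ^ 3 :=
        pow_le_pow_left₀ (by norm_num) hE.le 3
      have h3 : (3:ℝ) ≤ 8 * (Real.log 2 ^ 4 * Real.exp 1 ^ 3) := by
        nlinarith [mul_le_mul hl2' hE' (by positivity) (by positivity)]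
      have hE3pos : (0:ℝ) < Real.exp 1 ^ 3 := by positivity
      have h4 : 3 * δ ^ 3 < 3 / Real.exp 1 ^ 3 := by
        rw [lt_div_iff₀ hE3pos]; nlinarith [h1]
      have h5 : 3 / Real.exp 1 ^ 3 ≤ 8 * Real.log 2 ^ 4 := by
        rw [div_le_iff₀ hE3pos]; nlinarith [h3]
      have h7 : Real.log 2 * (2 * Real.log 2) ^ 3 ≤ Real.log 2 * Real.log S.T ^ 3 :=
        mul_le_mul_of_nonneg_left h2 hl2pos.le
      nlinarith [h4, h5, h7]
    push_cast
    have hfin : ((K : ℝ) + 1) * (2 * (δ / Real.log S.T) ^ 4)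
        ≤ (3 * Real.log S.T / (2 * Real.log 2)) * (2 * (δ / Real.log S.T) ^ 4) :=
      mul_le_mul_of_nonneg_right hK1 (by positivity)
    have heq : (3 * Real.log S.T / (2 * Real.log 2)) * (2 * (δ / Real.log S.T) ^ 4)
        = 3 * δ ^ 4 / (Real.log 2 * Real.log S.T ^ 3) := by
      field_simp
    calc ((K : ℝ) + 1) * (2 * Real.exp (-(4 * L)))
        = ((K : ℝ) + 1) * (2 * (δ / Real.log S.T) ^ 4) := by rw [hexp4]
      _ ≤ 3 * δ ^ 4 / (Real.log 2 * Real.log S.T ^ 3) := by rw [← heq]; exact hfin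
      _ ≤ δ := by
          rw [div_le_iff₀ (by positivity)]
          nlinarith [mul_le_mul_of_nonneg_left key hδ0.le]
  -- measurability of the bad events
  have hBmeas : ∀ k, MeasurableSet (B k) := by
    intro k
    have hrw : B k = ⋃ j ∈ Set.Iic (N k), {ω | A k ≤ |psum d j ω|} := by
      ext ω
      simp only [hBdef, Set.mem_setOf_eq, Set.mem_iUnion, Set.mem_Iic, exists_prop]
    rw [hrw]
    refine MeasurableSet.biUnion ((Set.finite_Iic _).countable) (fun j _ => ?_)
    exact measurableSet_le measurable_const
      (((psum_meas hdmeas j).mono (S.ℱ.le j) le_rfl).abs)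
  have hUmeas : MeasurableSet (⋃ k ∈ Finset.range (K + 1), B k) :=
    Finset.measurableSet_biUnion _ (fun k _ => hBmeas k)
  -- the good event is contained in the target event
  have hincl : (⋃ k ∈ Finset.range (K + 1), B k)ᶜ ⊆
      {ω | ∀ t ∈ Finset.Icc 1 S.T,
        |w S (t + 1) ω - μy S| ≤
          2 * max (2 * Real.sqrt (2 * t * Q)) (c * Real.sqrt L) * Real.sqrt L / (S.T : ℝ)
          + (1 - (t : ℝ) / (S.T : ℝ)) * |μy S|} := by
    intro ω hω t ht
    rw [Finset.mem_Icc] at ht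
    obtain ⟨ht1, htT⟩ := ht
    have htpos : (0:ℝ) < t := by exact_mod_cast ht1
    have htTr : (t : ℝ) ≤ (S.T : ℝ) := by exact_mod_cast htT
    have hkK : Nat.log 2 t ≤ K := Nat.log_mono_right htT
    have hnb : ω ∉ B (Nat.log 2 t) := by
      intro hmem
      exact hω (Set.mem_biUnion (Finset.mem_range.mpr (Nat.lt_succ_of_le hkK)) hmem)
    have h2kt : 2 ^ Nat.log 2 t ≤ t := Nat.pow_log_le_self 2 (by omega)
    have htNk : t ≤ N (Nat.log 2 t) := by
      refine le_min ?_ htT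
      have := Nat.lt_pow_succ_log_self (by norm_num : 1 < 2) t
      omega
    have hlt : |psum d t ω| < A (Nat.log 2 t) := by
      by_contra hcon
      push_neg at hcon
      exact hnb ⟨t, htNk, hcon⟩
    have hsq : A (Nat.log 2 t) ≤ 4 * Real.sqrt (2 * t * Q) * Real.sqrt L := by
      have h2k : ((2:ℝ)) ^ Nat.log 2 t ≤ (t : ℝ) := by exact_mod_cast h2kt
      have harg : 2 * (2:ℝ) ^ (Nat.log 2 t) * Q ≤ 2 * (t:ℝ) * Q := by nlinarith [hQpos]
      have hs := Real.sqrt_le_sqrt harg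
      have h4 : (0:ℝ) ≤ Real.sqrt L := Real.sqrt_nonneg _
      simp only [hAdef]
      nlinarith [Real.sqrt_nonneg (2 * (2:ℝ) ^ (Nat.log 2 t) * Q),
        mul_le_mul_of_nonneg_right hs h4]
    have hmax : 4 * Real.sqrt (2 * t * Q) * Real.sqrt L
        ≤ 2 * max (2 * Real.sqrt (2 * t * Q)) (c * Real.sqrt L) * Real.sqrt L := by
      have h1 : (2:ℝ) * Real.sqrt (2 * t * Q)
          ≤ max (2 * Real.sqrt (2 * t * Q)) (c * Real.sqrt L) := le_max_left _ _
      nlinarith [Real.sqrt_nonneg L, Real.sqrt_nonneg (2 * t * Q)]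
    have hTne : (S.T : ℝ) ≠ 0 := ne_of_gt hTpos
    have hsum : psum d t ω = (∑ s ∈ Finset.Icc 1 t, g S s ω) - t * μy S := by
      rw [psum, Finset.sum_sub_distrib, Finset.sum_const, Nat.card_Icc]
      simp [nsmul_eq_mul]
    have hw : w S (t + 1) ω - μy S = psum d t ω / S.T + ((t : ℝ) / S.T - 1) * μy S := by
      rw [w]
      simp only [Nat.add_sub_cancel]
      rw [hsum]
      field_simp
      ring
    have habs2 : |w S (t + 1) ω - μy S|
        ≤ |psum d t ω| / S.T + (1 - (t : ℝ) / S.T) * |μy S| := by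
      rw [hw]
      refine (abs_add_le _ _).trans ?_
      have e1 : |psum d t ω / (S.T : ℝ)| = |psum d t ω| / S.T := by
        rw [abs_div, abs_of_pos hTpos]
      have e2 : |((t : ℝ) / S.T - 1) * μy S| = (1 - (t : ℝ) / S.T) * |μy S| := by
        rw [abs_mul]
        congr 1
        rw [abs_of_nonpos (by rw [sub_nonpos, div_le_one hTpos]; exact htTr)]
        ring
      rw [e1, e2]
    refine habs2.trans ?_
    have hfrac : |psum d t ω| / (S.T : ℝ)
        ≤ 2 * max (2 * Real.sqrt (2 * t * Q)) (c * Real.sqrt L) * Real.sqrt L / (S.T : ℝ) := by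
      gcongr
      exact hlt.le.trans (hsq.trans hmax)
    linarith
  refine le_trans ?_ (measure_mono hincl)
  rw [prob_compl_eq_one_sub hUmeas]
  have h2 : ENNReal.ofReal (1 - δ) = 1 - ENNReal.ofReal δ := by
    rw [ENNReal.ofReal_sub _ hδ0.le, ENNReal.ofReal_one]
  rw [h2]
  exact tsub_le_tsub_left hUnion 1
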